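/- Let n(z) = (2π)^{-1/2} e^{-z²/2} be the standard normal density and let z₀ be the unique positive solution of (z₀²/2)e^{z₀²/2} = e^{z₀²/2} + 1. For all real constants A ≥ 0 and B ∈ ℝ, and every finite signed measure ω on ℝ with total variation norm ‖ω‖_TV ≤ 1 and ∫ n(z) ω(dz) = 0, one has A ∫ z² n(z) ω(dz) + B ∫ z n(z) ω(dz) ≤ (2A e^{-z₀²/2} + |B| e^{-1/2})/√(2π). -/

import Mathlib

open MeasureTheory Set

/-- Integral of a function with respect to a finite signed measure, defined via
the Jordan decomposition. -/
noncomputable def signedIntegral (f : ℝ → ℝ) (ω : SignedMeasure ℝ) : ℝ :=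
  (∫ x, f x ∂ω.toJordanDecomposition.posPart)
    - (∫ x, f x ∂ω.toJordanDecomposition.negPart)

/-- The standard normal density. -/
noncomputable def stdNormalDensity (z : ℝ) : ℝ :=
  (Real.sqrt (2 * Real.pi))⁻¹ * Real.exp (-z ^ 2 / 2)

lemma continuous_stdNormalDensity : Continuous stdNormalDensity := by
  unfold stdNormalDensity
  fun_prop

/-- A continuous function bounded in absolute value is integrable w.r.t. a
finite measure. -/
lemma integrable_of_abs_le {f : ℝ → ℝ} (hf : Continuous f) {M : ℝ}
    (hM : ∀ z, |f z| ≤ M) (μ : Measure ℝ) [IsFiniteMeasure μ] :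
    Integrable f μ :=
  (integrable_const M).mono' hf.aestronglyMeasurable
    (Filter.Eventually.of_forall fun z => by simpa [Real.norm_eq_abs] using hM z)

/-- Basic bound for the signed integral of a bounded function. -/
lemma abs_signedIntegral_le {f : ℝ → ℝ} (hf : Continuous f) {M : ℝ}
    (hM : ∀ z, |f z| ≤ M) (ω : SignedMeasure ℝ)
    (hTV : ω.totalVariation univ ≤ 1) :
    |signedIntegral f ω| ≤ M := by
  have hM0 : 0 ≤ M := le_trans (abs_nonneg _) (hM 0)
  set p := ω.toJordanDecomposition.posPart with hp
  set q := ω.toJordanDecomposition.negPart with hq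
  have h1 : ‖∫ x, f x ∂p‖ ≤ M * (p univ).toReal :=
    norm_integral_le_of_norm_le_const
      (Filter.Eventually.of_forall fun z => by simpa [Real.norm_eq_abs] using hM z)
  have h2 : ‖∫ x, f x ∂q‖ ≤ M * (q univ).toReal :=
    norm_integral_le_of_norm_le_const
      (Filter.Eventually.of_forall fun z => by simpa [Real.norm_eq_abs] using hM z)
  have htv : (p univ).toReal + (q univ).toReal ≤ 1 := by
    have hsum : p univ + q univ ≤ 1 := by
      have : ω.totalVariation univ = p univ + q univ := by
        rw [SignedMeasure.totalVariation, Measure.add_apply]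
      rw [this] at hTV
      exact hTV
    have hfin1 : p univ ≠ ⊤ := measure_ne_top _ _
    have hfin2 : q univ ≠ ⊤ := measure_ne_top _ _
    have := ENNReal.toReal_mono (by simp) hsum
    rwa [ENNReal.toReal_add hfin1 hfin2, ENNReal.toReal_one] at this
  have habs : |signedIntegral f ω| ≤ ‖∫ x, f x ∂p‖ + ‖∫ x, f x ∂q‖ := by
    rw [signedIntegral]
    exact (abs_sub _ _)
  have hp0 : (0:ℝ) ≤ (p univ).toReal := ENNReal.toReal_nonneg
  have hq0 : (0:ℝ) ≤ (q univ).toReal := ENNReal.toReal_nonneg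
  nlinarith [habs, h1, h2]

/-- For `A ≥ 0`, `B ∈ ℝ`, and every vega-neutral signed measure
of total variation at most one,
`A ∫ z² n dω + B ∫ z n dω ≤ (2A e^{-z₀²/2} + |B| e^{-1/2})/√(2π)`, where `z₀`
is the unique positive solution of `(z₀²/2)e^{z₀²/2} = e^{z₀²/2} + 1`. -/
theorem profit_le_butterfly_plus_risk_reversal
    (z₀ : ℝ) (hz₀_pos : 0 < z₀)
    (hz₀_eq : (z₀ ^ 2 / 2) * Real.exp (z₀ ^ 2 / 2) = Real.exp (z₀ ^ 2 / 2) + 1)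
    (A B : ℝ) (hA : 0 ≤ A)
    (ω : SignedMeasure ℝ)
    (hTV : ω.totalVariation univ ≤ 1)
    (hneutral : signedIntegral stdNormalDensity ω = 0) :
    A * signedIntegral (fun z => z ^ 2 * stdNormalDensity z) ω
      + B * signedIntegral (fun z => z * stdNormalDensity z) ω ≤
      (2 * A * Real.exp (-z₀ ^ 2 / 2) + |B| * Real.exp (-(1:ℝ)/2)) /
        Real.sqrt (2 * Real.pi) := by
  set s : ℝ := Real.sqrt (2 * Real.pi) with hs_def
  have hs : 0 < s := Real.sqrt_pos.mpr (by positivity)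
  set c : ℝ := Real.exp (-z₀ ^ 2 / 2) with hc_def
  have hc : 0 < c := Real.exp_pos _
  have hEc : Real.exp (z₀ ^ 2 / 2) * c = 1 := by
    rw [hc_def, ← Real.exp_add, show z₀ ^ 2 / 2 + -z₀ ^ 2 / 2 = 0 by ring,
      Real.exp_zero]
  have hz2 : z₀ ^ 2 = 2 * c + 2 := by
    linear_combination (2 * c) * hz₀_eq + (2 - z₀ ^ 2) * hEc
  set lam : ℝ := 2 * c with hlam_def
  -- pointwise bound on the density
  have hden_nonneg : ∀ z : ℝ, 0 ≤ stdNormalDensity z := fun z => by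
    unfold stdNormalDensity; positivity
  have hexp_le_one : ∀ z : ℝ, Real.exp (-z ^ 2 / 2) ≤ 1 := fun z => by
    rw [show (1:ℝ) = Real.exp 0 by rw [Real.exp_zero]]
    exact Real.exp_le_exp.mpr (by nlinarith [sq_nonneg z])
  have hden_le : ∀ z : ℝ, stdNormalDensity z ≤ s⁻¹ := fun z => by
    unfold stdNormalDensity
    rw [← hs_def]
    calc s⁻¹ * Real.exp (-z ^ 2 / 2) ≤ s⁻¹ * 1 := by
          exact mul_le_mul_of_nonneg_left (hexp_le_one z) (by positivity)
      _ = s⁻¹ := by ring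
  -- Bound 1 : |(z² - lam) n z| ≤ 2c/s
  have hbound1 : ∀ z : ℝ, |(z ^ 2 - lam) * stdNormalDensity z| ≤ 2 * c * s⁻¹ := by
    intro z
    have hkey : |(z ^ 2 - lam) * Real.exp (-z ^ 2 / 2)| ≤ 2 * c := by
      have hep : 0 < Real.exp (-z ^ 2 / 2) := Real.exp_pos _
      have hele : Real.exp (-z ^ 2 / 2) ≤ 1 := hexp_le_one z
      rw [abs_le]
      constructor
      · -- lower bound: -(2c) ≤ (z² - lam) e^{-z²/2}
        nlinarith [sq_nonneg z, hc, hep, hele]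
      · -- upper bound
        have key := Real.add_one_le_exp ((z ^ 2 - lam - 2) / 2)
        have hmul := mul_le_mul_of_nonneg_right key hep.le
        have hprod : Real.exp ((z ^ 2 - lam - 2) / 2) * Real.exp (-z ^ 2 / 2)
            = Real.exp (-(lam + 2) / 2) := by
          rw [← Real.exp_add]; congr 1; ring
        have hc2 : Real.exp (-(lam + 2) / 2) = c := by
          rw [hc_def]
          exact congrArg Real.exp (by rw [hz2])
        rw [hprod, hc2] at hmul
        nlinarith [hmul]
    unfold stdNormalDensity
    rw [← hs_def]
    have : |(z ^ 2 - lam) * (s⁻¹ * Real.exp (-z ^ 2 / 2))|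
        = s⁻¹ * |(z ^ 2 - lam) * Real.exp (-z ^ 2 / 2)| := by
      rw [abs_mul, abs_mul, abs_of_nonneg (by positivity : (0:ℝ) ≤ s⁻¹), abs_mul]
      ring
    rw [this]
    calc s⁻¹ * |(z ^ 2 - lam) * Real.exp (-z ^ 2 / 2)| ≤ s⁻¹ * (2 * c) :=
          mul_le_mul_of_nonneg_left hkey (by positivity)
      _ = 2 * c * s⁻¹ := by ring
  -- Bound 2 : |z n z| ≤ e^{-1/2}/s
  have hbound2 : ∀ z : ℝ, |z * stdNormalDensity z|
      ≤ Real.exp (-(1:ℝ)/2) * s⁻¹ := by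
    intro z
    have hkey : |z| * Real.exp (-z ^ 2 / 2) ≤ Real.exp (-(1:ℝ)/2) := by
      have hep : 0 < Real.exp (-z ^ 2 / 2) := Real.exp_pos _
      have habs : |z| ≤ (z ^ 2 + 1) / 2 := by
        nlinarith [sq_nonneg (|z| - 1), sq_abs z, abs_nonneg z]
      have key := Real.add_one_le_exp ((z ^ 2 - 1) / 2)
      have hmul := mul_le_mul_of_nonneg_right key hep.le
      have hprod : Real.exp ((z ^ 2 - 1) / 2) * Real.exp (-z ^ 2 / 2)
          = Real.exp (-(1:ℝ)/2) := by
        rw [← Real.exp_add]; congr 1; ring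
      rw [hprod] at hmul
      nlinarith [hmul, mul_le_mul_of_nonneg_right habs hep.le]
    unfold stdNormalDensity
    rw [← hs_def]
    have : |z * (s⁻¹ * Real.exp (-z ^ 2 / 2))|
        = s⁻¹ * (|z| * Real.exp (-z ^ 2 / 2)) := by
      rw [abs_mul, abs_mul, abs_of_nonneg (by positivity : (0:ℝ) ≤ s⁻¹),
        abs_of_nonneg (Real.exp_pos _).le]
      ring
    rw [this]
    calc s⁻¹ * (|z| * Real.exp (-z ^ 2 / 2)) ≤ s⁻¹ * Real.exp (-(1:ℝ)/2) :=
          mul_le_mul_of_nonneg_left hkey (by positivity)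
      _ = Real.exp (-(1:ℝ)/2) * s⁻¹ := by ring
  -- bound on density itself
  have hbound0 : ∀ z : ℝ, |stdNormalDensity z| ≤ s⁻¹ := fun z => by
    rw [abs_of_nonneg (hden_nonneg z)]; exact hden_le z
  -- continuity
  have hcont1 : Continuous fun z : ℝ => (z ^ 2 - lam) * stdNormalDensity z :=
    (by fun_prop : Continuous fun z : ℝ => z ^ 2 - lam).mul continuous_stdNormalDensity
  have hcont2 : Continuous fun z : ℝ => z * stdNormalDensity z :=
    continuous_id.mul continuous_stdNormalDensity
  -- splitting lemma
  have hsplit : signedIntegral (fun z => z ^ 2 * stdNormalDensity z) ω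
      = signedIntegral (fun z => (z ^ 2 - lam) * stdNormalDensity z) ω
        + lam * signedIntegral stdNormalDensity ω := by
    have key : ∀ (μ : Measure ℝ), IsFiniteMeasure μ →
        ∫ z, z ^ 2 * stdNormalDensity z ∂μ
          = (∫ z, (z ^ 2 - lam) * stdNormalDensity z ∂μ)
            + lam * ∫ z, stdNormalDensity z ∂μ := by
      intro μ hμ
      haveI := hμ
      have hI1 : Integrable (fun z => (z ^ 2 - lam) * stdNormalDensity z) μ :=
        integrable_of_abs_le hcont1 hbound1 μ
      have hI2 : Integrable (fun z => lam * stdNormalDensity z) μ :=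
        (integrable_of_abs_le continuous_stdNormalDensity hbound0 μ).const_mul lam
      calc ∫ z, z ^ 2 * stdNormalDensity z ∂μ
          = ∫ z, ((z ^ 2 - lam) * stdNormalDensity z
              + lam * stdNormalDensity z) ∂μ :=
            integral_congr_ae (Filter.Eventually.of_forall fun z => by ring)
        _ = (∫ z, (z ^ 2 - lam) * stdNormalDensity z ∂μ)
              + ∫ z, lam * stdNormalDensity z ∂μ := integral_add hI1 hI2
        _ = (∫ z, (z ^ 2 - lam) * stdNormalDensity z ∂μ)
              + lam * ∫ z, stdNormalDensity z ∂μ := by rw [integral_const_mul]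
    unfold signedIntegral
    rw [key _ inferInstance, key _ inferInstance]
    ring
  have hSI1 : signedIntegral (fun z => z ^ 2 * stdNormalDensity z) ω
      = signedIntegral (fun z => (z ^ 2 - lam) * stdNormalDensity z) ω := by
    rw [hsplit, hneutral]; ring
  have h1 : |signedIntegral (fun z => (z ^ 2 - lam) * stdNormalDensity z) ω|
      ≤ 2 * c * s⁻¹ := abs_signedIntegral_le hcont1 hbound1 ω hTV
  have h2 : |signedIntegral (fun z => z * stdNormalDensity z) ω|
      ≤ Real.exp (-(1:ℝ)/2) * s⁻¹ := abs_signedIntegral_le hcont2 hbound2 ω hTV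
  have hAterm : A * signedIntegral (fun z => z ^ 2 * stdNormalDensity z) ω
      ≤ A * (2 * c * s⁻¹) := by
    rw [hSI1]
    calc A * signedIntegral (fun z => (z ^ 2 - lam) * stdNormalDensity z) ω
        ≤ A * |signedIntegral (fun z => (z ^ 2 - lam) * stdNormalDensity z) ω| :=
          mul_le_mul_of_nonneg_left (le_abs_self _) hA
      _ ≤ A * (2 * c * s⁻¹) := mul_le_mul_of_nonneg_left h1 hA
  have hBterm : B * signedIntegral (fun z => z * stdNormalDensity z) ω
      ≤ |B| * (Real.exp (-(1:ℝ)/2) * s⁻¹) := by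
    calc B * signedIntegral (fun z => z * stdNormalDensity z) ω
        ≤ |B * signedIntegral (fun z => z * stdNormalDensity z) ω| := le_abs_self _
      _ = |B| * |signedIntegral (fun z => z * stdNormalDensity z) ω| := abs_mul _ _
      _ ≤ |B| * (Real.exp (-(1:ℝ)/2) * s⁻¹) :=
          mul_le_mul_of_nonneg_left h2 (abs_nonneg _)
  have hfinal : A * (2 * c * s⁻¹) + |B| * (Real.exp (-(1:ℝ)/2) * s⁻¹)
      = (2 * A * c + |B| * Real.exp (-(1:ℝ)/2)) / s := by
    field_simp
  calc A * signedIntegral (fun z => z ^ 2 * stdNormalDensity z) ω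
      + B * signedIntegral (fun z => z * stdNormalDensity z) ω
      ≤ A * (2 * c * s⁻¹) + |B| * (Real.exp (-(1:ℝ)/2) * s⁻¹) :=
        add_le_add hAterm hBterm
    _ = (2 * A * c + |B| * Real.exp (-(1:ℝ)/2)) / s := hfinal
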